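/- Let T, T^k ⊆ {1,…,n} with |T ∪ T^k| = s and δ_s < 1, and let v ∈ ℝ^m. Then ‖Φ_T' P^⊥_{T^k} v‖₂ ≤ √(1+δ_s) ‖v‖₂. -/

import Mathlib

open Finset Matrix

/-- Squared-entries `ℓ₂` norm of a finite real vector. -/
noncomputable def l2 {ι : Type*} [Fintype ι] (x : ι → ℝ) : ℝ :=
  Real.sqrt (∑ i, x i ^ 2)

/-- A vector is `K`-sparse if it has at most `K` nonzero entries. -/
def Ksparse {n : ℕ} (K : ℕ) (x : Fin n → ℝ) : Prop :=
  (Finset.univ.filter (fun i => x i ≠ 0)).card ≤ K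

/-- `δ` is a valid restricted isometry constant of order `K` for `Φ`. -/
def RIP {m n : ℕ} (Φ : Matrix (Fin m) (Fin n) ℝ) (K : ℕ) (δ : ℝ) : Prop :=
  ∀ x : Fin n → ℝ, Ksparse K x →
    (1 - δ) * ∑ i, x i ^ 2 ≤ ∑ i, (Φ.mulVec x) i ^ 2 ∧
    ∑ i, (Φ.mulVec x) i ^ 2 ≤ (1 + δ) * ∑ i, x i ^ 2

/-- Column submatrix `Φ_S`. -/
def colSub {m n : ℕ} (Φ : Matrix (Fin m) (Fin n) ℝ) (S : Finset (Fin n)) :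
    Matrix (Fin m) S ℝ := fun r c => Φ r c

/-- Gram matrix `Φ_S' Φ_S`. -/
noncomputable def gram {m n : ℕ} (Φ : Matrix (Fin m) (Fin n) ℝ) (S : Finset (Fin n)) :
    Matrix S S ℝ := (colSub Φ S)ᵀ * colSub Φ S

/-- Pseudoinverse `Φ_S^† = (Φ_S'Φ_S)⁻¹ Φ_S'` (for `Φ_S` of full column rank). -/
noncomputable def pinv {m n : ℕ} (Φ : Matrix (Fin m) (Fin n) ℝ) (S : Finset (Fin n)) :
    Matrix S (Fin m) ℝ := (gram Φ S)⁻¹ * (colSub Φ S)ᵀ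

/-- Projection `P_S = Φ_S Φ_S^†` onto the span of the columns of `Φ_S`. -/
noncomputable def proj {m n : ℕ} (Φ : Matrix (Fin m) (Fin n) ℝ) (S : Finset (Fin n)) :
    Matrix (Fin m) (Fin m) ℝ := colSub Φ S * pinv Φ S

/-- Projection `P_S^⊥ = I - P_S`. -/
noncomputable def projPerp {m n : ℕ} (Φ : Matrix (Fin m) (Fin n) ℝ) (S : Finset (Fin n)) :
    Matrix (Fin m) (Fin m) ℝ := 1 - proj Φ S

/- ---------- auxiliary lemmas ---------- -/

lemma dot_self_nonneg' {ι : Type*} [Fintype ι] (x : ι → ℝ) : 0 ≤ x ⬝ᵥ x :=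
  Finset.sum_nonneg fun i _ => mul_self_nonneg _

lemma sumsq_eq_dot {ι : Type*} [Fintype ι] (x : ι → ℝ) : (∑ i, x i ^ 2) = x ⬝ᵥ x := by
  simp [dotProduct, sq]

lemma l2_eq_sqrt_dot {ι : Type*} [Fintype ι] (x : ι → ℝ) : l2 x = Real.sqrt (x ⬝ᵥ x) := by
  rw [l2, sumsq_eq_dot]

lemma dot_cs {ι : Type*} [Fintype ι] (x y : ι → ℝ) :
    (x ⬝ᵥ y) ^ 2 ≤ (x ⬝ᵥ x) * (y ⬝ᵥ y) := by
  have := Finset.sum_mul_sq_le_sq_mul_sq Finset.univ x y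
  simpa [dotProduct, sq] using this

/-- The `a² ≤ c·a·b ⇒ a ≤ c·b` cancellation for nonnegative quantities. -/
lemma sq_le_cancel {a b c : ℝ} (ha : 0 ≤ a) (hc : 0 ≤ c) (hb : 0 ≤ b)
    (h : a ^ 2 ≤ c * a * b) : a ≤ c * b := by
  rcases eq_or_lt_of_le ha with h0 | h0
  · rw [← h0]; positivity
  · nlinarith

/-- Operator bound transfers to the transpose. -/
lemma transpose_bound {ι κ : Type*} [Fintype ι] [Fintype κ]
    (A : Matrix ι κ ℝ) (c : ℝ) (hc : 0 ≤ c)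
    (h : ∀ u : κ → ℝ, A.mulVec u ⬝ᵥ A.mulVec u ≤ c * (u ⬝ᵥ u)) (w : ι → ℝ) :
    Aᵀ.mulVec w ⬝ᵥ Aᵀ.mulVec w ≤ c * (w ⬝ᵥ w) := by
  set y : κ → ℝ := Aᵀ.mulVec w with hy
  have h1 : y ⬝ᵥ y = A.mulVec y ⬝ᵥ w := by
    calc y ⬝ᵥ y = y ⬝ᵥ Aᵀ.mulVec w := rfl
    _ = Matrix.vecMul y Aᵀ ⬝ᵥ w := by rw [Matrix.dotProduct_mulVec]
    _ = A.mulVec y ⬝ᵥ w := by rw [Matrix.vecMul_transpose]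
  have h2 : (y ⬝ᵥ y) ^ 2 ≤ (c * (y ⬝ᵥ y)) * (w ⬝ᵥ w) := by
    calc (y ⬝ᵥ y) ^ 2 = (A.mulVec y ⬝ᵥ w) ^ 2 := by rw [h1]
    _ ≤ (A.mulVec y ⬝ᵥ A.mulVec y) * (w ⬝ᵥ w) := dot_cs _ _
    _ ≤ (c * (y ⬝ᵥ y)) * (w ⬝ᵥ w) :=
        mul_le_mul_of_nonneg_right (h y) (dot_self_nonneg' w)
  exact sq_le_cancel (dot_self_nonneg' y) hc (dot_self_nonneg' w) (by linarith [h2])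

lemma gram_symm {m n : ℕ} (Φ : Matrix (Fin m) (Fin n) ℝ) (S : Finset (Fin n)) :
    (gram Φ S)ᵀ = gram Φ S := by
  simp [_root_.gram, Matrix.transpose_mul]

lemma proj_symm {m n : ℕ} (Φ : Matrix (Fin m) (Fin n) ℝ) (S : Finset (Fin n)) :
    (proj Φ S)ᵀ = proj Φ S := by
  simp [proj, pinv, Matrix.transpose_mul, Matrix.transpose_nonsing_inv, gram_symm,
    Matrix.mul_assoc]

lemma proj_idem {m n : ℕ} (Φ : Matrix (Fin m) (Fin n) ℝ) (S : Finset (Fin n))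
    (hd : IsUnit (gram Φ S).det) : proj Φ S * proj Φ S = proj Φ S := by
  have h : (gram Φ S)⁻¹ * gram Φ S = 1 := Matrix.nonsing_inv_mul _ hd
  calc proj Φ S * proj Φ S
      = colSub Φ S * ((gram Φ S)⁻¹ * (gram Φ S) * ((gram Φ S)⁻¹ * (colSub Φ S)ᵀ)) := by
        simp only [proj, pinv, _root_.gram, Matrix.mul_assoc]
    _ = proj Φ S := by rw [h]; simp only [proj, pinv, Matrix.one_mul]

lemma projPerp_contraction {m n : ℕ} (Φ : Matrix (Fin m) (Fin n) ℝ) (S : Finset (Fin n))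
    (v : Fin m → ℝ) :
    (projPerp Φ S).mulVec v ⬝ᵥ (projPerp Φ S).mulVec v ≤ v ⬝ᵥ v := by
  by_cases hd : IsUnit (gram Φ S).det
  · set P := projPerp Φ S with hP
    have hsym : Pᵀ = P := by
      simp [hP, projPerp, Matrix.transpose_sub, proj_symm]
    have hidem : P * P = P := by
      have := proj_idem Φ S hd
      simp only [hP, projPerp, Matrix.sub_mul, Matrix.mul_sub, Matrix.one_mul,
        Matrix.mul_one, this]
      abel
    set x := P.mulVec v with hx
    have h1 : x ⬝ᵥ x = x ⬝ᵥ v := by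
      calc x ⬝ᵥ x = x ⬝ᵥ P.mulVec v := rfl
      _ = Matrix.vecMul x P ⬝ᵥ v := by rw [Matrix.dotProduct_mulVec]
      _ = x ⬝ᵥ v := by
          congr 1
          rw [← Matrix.mulVec_transpose, hsym, hx, Matrix.mulVec_mulVec, hidem]
    have h2 : (x ⬝ᵥ x) ^ 2 ≤ (1 * (x ⬝ᵥ x)) * (v ⬝ᵥ v) := by
      calc (x ⬝ᵥ x) ^ 2 = (x ⬝ᵥ v) ^ 2 := by rw [h1]
      _ ≤ (x ⬝ᵥ x) * (v ⬝ᵥ v) := dot_cs _ _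
      _ = (1 * (x ⬝ᵥ x)) * (v ⬝ᵥ v) := by ring
    have := sq_le_cancel (dot_self_nonneg' x) zero_le_one (dot_self_nonneg' v) h2
    simpa using this
  · have h0 : (gram Φ S)⁻¹ = 0 := Matrix.nonsing_inv_apply_not_isUnit _ hd
    simp [projPerp, proj, pinv, h0]

/-- RIP upper inequality restricted to columns of `T`. -/
lemma colSub_bound {m n : ℕ} (Φ : Matrix (Fin m) (Fin n) ℝ) (T Tk : Finset (Fin n)) (δ : ℝ)
    (hRIP : RIP Φ (T ∪ Tk).card δ) (u : T → ℝ) :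
    (colSub Φ T).mulVec u ⬝ᵥ (colSub Φ T).mulVec u ≤ (1 + δ) * (u ⬝ᵥ u) := by
  classical
  set x : Fin n → ℝ := fun i => if h : i ∈ T then u ⟨i, h⟩ else 0 with hxdef
  have hxT : ∀ i ∉ T, x i = 0 := by
    intro i hi; simp [hxdef, hi]
  have hsparse : Ksparse (T ∪ Tk).card x := by
    refine le_trans (Finset.card_le_card ?_) (Finset.card_le_card Finset.subset_union_left)
    intro i hi
    simp only [Finset.mem_filter] at hi
    by_contra hiT
    exact hi.2 (hxT i hiT)
  have hmv : Φ.mulVec x = (colSub Φ T).mulVec u := by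
    funext r
    have : ∑ j, Φ r j * x j = ∑ j ∈ T, Φ r j * x j := by
      refine (Finset.sum_subset (Finset.subset_univ T) ?_).symm
      intro j _ hj; rw [hxT j hj, mul_zero]
    calc Φ.mulVec x r = ∑ j, Φ r j * x j := rfl
    _ = ∑ j ∈ T, Φ r j * x j := this
    _ = ∑ j ∈ T.attach, Φ r ↑j * x ↑j := (Finset.sum_attach T fun j => Φ r j * x j).symm
    _ = ∑ j : T, Φ r ↑j * u j := by
        refine Finset.sum_congr rfl fun j _ => ?_
        simp [hxdef, j.2]
    _ = (colSub Φ T).mulVec u r := rfl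
  have hsum : (∑ i, x i ^ 2) = u ⬝ᵥ u := by
    have : ∑ i, x i ^ 2 = ∑ i ∈ T, x i ^ 2 := by
      refine (Finset.sum_subset (Finset.subset_univ T) ?_).symm
      intro j _ hj; rw [hxT j hj]; ring
    rw [this, ← Finset.sum_attach T fun j => x j ^ 2]
    rw [show (u ⬝ᵥ u) = ∑ j : T, u j ^ 2 from (sumsq_eq_dot u).symm]
    refine Finset.sum_congr rfl fun j _ => ?_
    simp [hxdef, j.2]
  have := (hRIP x hsparse).2
  rw [hmv, hsum, sumsq_eq_dot] at this
  exact this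

/-- `‖Φ_T' P⊥_{Tᵏ} v‖₂ ≤ √(1+δ_s) ‖v‖₂` where `s = |T ∪ Tᵏ|`. -/
theorem proj_perp_correlation_bound {m n : ℕ} (Φ : Matrix (Fin m) (Fin n) ℝ)
    (T Tk : Finset (Fin n)) (δ : ℝ) (hδ1 : δ < 1)
    (hRIP : RIP Φ (T ∪ Tk).card δ) (v : Fin m → ℝ) :
    l2 ((colSub Φ T)ᵀ.mulVec ((projPerp Φ Tk).mulVec v)) ≤
      Real.sqrt (1 + δ) * l2 v := by
  classical
  rcases Finset.eq_empty_or_nonempty T with hT | hT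
  · subst hT
    have : IsEmpty ((∅ : Finset (Fin n)) : Type _) := by
      simpa using Finset.isEmpty_coe_sort.2 rfl
    have hL : l2 ((colSub Φ (∅ : Finset (Fin n)))ᵀ.mulVec ((projPerp Φ Tk).mulVec v)) = 0 := by
      rw [l2]
      simp [Finset.univ_eq_empty]
    rw [hL]
    exact mul_nonneg (Real.sqrt_nonneg _) (Real.sqrt_nonneg _)
  · -- first, 1 + δ ≥ 0
    obtain ⟨t, ht⟩ := hT
    have h1δ : 0 ≤ 1 + δ := by
      set x : Fin n → ℝ := fun i => if i = t then 1 else 0 with hxdef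
      have hsparse : Ksparse (T ∪ Tk).card x := by
        have hsub : (Finset.univ.filter (fun i => x i ≠ 0)) ⊆ {t} := by
          intro i hi
          simp only [Finset.mem_filter, hxdef] at hi
          rcases eq_or_ne i t with h | h
          · simp [h]
          · simp [h] at hi
        have h1 : (Finset.univ.filter (fun i => x i ≠ 0)).card ≤ 1 :=
          le_trans (Finset.card_le_card hsub) (by simp)
        have h2 : 1 ≤ (T ∪ Tk).card :=
          Finset.card_pos.2 ⟨t, Finset.mem_union_left _ ht⟩
        exact le_trans h1 h2
      have hx2 : (∑ i, x i ^ 2) = 1 := by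
        simp [hxdef, ite_pow, Finset.sum_ite_eq']
      have := (hRIP x hsparse).2
      rw [hx2, mul_one] at this
      have hnn : (0:ℝ) ≤ ∑ i, (Φ.mulVec x) i ^ 2 := Finset.sum_nonneg fun i _ => sq_nonneg _
      linarith
    set w := (projPerp Φ Tk).mulVec v with hw
    have hbound : (colSub Φ T)ᵀ.mulVec w ⬝ᵥ (colSub Φ T)ᵀ.mulVec w ≤ (1 + δ) * (w ⬝ᵥ w) :=
      transpose_bound (colSub Φ T) (1 + δ) h1δ (colSub_bound Φ T Tk δ hRIP) w
    have hcontr : w ⬝ᵥ w ≤ v ⬝ᵥ v := projPerp_contraction Φ Tk v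
    have hfinal : (colSub Φ T)ᵀ.mulVec w ⬝ᵥ (colSub Φ T)ᵀ.mulVec w ≤ (1 + δ) * (v ⬝ᵥ v) :=
      le_trans hbound (mul_le_mul_of_nonneg_left hcontr h1δ)
    rw [l2_eq_sqrt_dot, l2_eq_sqrt_dot, ← Real.sqrt_mul h1δ]
    exact Real.sqrt_le_sqrt hfinal
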